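/- For integers n, p, m (with the identity interpreted as polynomial identity in q, or for q > 1), C_q(n−p, m) = ∑_{k=0}^{m} (−1)^k q^{−mp + binom(k,2)} C_q(p,k) C_q(n−k, m−k). -/

import Mathlib

/-- The Gaussian binomial coefficient `C_q(a,k)`, extended to integer arguments,
with value `0` when `k < 0`. -/
noncomputable def gbinom (q : ℝ) (a k : ℤ) : ℝ :=
  if k < 0 then 0
  else ∏ i ∈ Finset.range k.toNat, (q ^ (a - k + i + 1) - 1) / (q ^ ((i : ℤ) + 1) - 1)

lemma gbinom_ofNat (q : ℝ) (a : ℤ) (k : ℕ) :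
    gbinom q a (k : ℤ) =
      ∏ i ∈ Finset.range k, (q ^ (a - k + i + 1) - 1) / (q ^ ((i : ℤ) + 1) - 1) := by
  simp [gbinom]

lemma gbinom_zero (q : ℝ) (a : ℤ) : gbinom q a 0 = 1 := by
  simp [gbinom]

lemma gbinom_neg (q : ℝ) (a : ℤ) {k : ℤ} (h : k < 0) : gbinom q a k = 0 := by
  simp [gbinom, h]

lemma gbinom_absorb (q : ℝ) (a : ℤ) (k : ℕ) :
    gbinom q a ((k : ℤ) + 1) =
      gbinom q (a - 1) k * (q ^ a - 1) / (q ^ ((k : ℤ) + 1) - 1) := by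
  have h1 : ((k : ℤ) + 1) = ((k + 1 : ℕ) : ℤ) := by push_cast; ring
  rw [h1, gbinom_ofNat, gbinom_ofNat, Finset.prod_range_succ, mul_div_assoc]
  congr 1
  · apply Finset.prod_congr rfl
    intro i _
    congr 2
    push_cast; ring
  · congr 3
    push_cast; ring


lemma hden {q : ℝ} (hq : 1 < q) (k : ℕ) : q ^ ((k : ℤ) + 1) - 1 ≠ 0 := by
  have h1 : ((k : ℤ) + 1) = ((k + 1 : ℕ) : ℤ) := by push_cast; ring
  rw [h1, zpow_natCast]
  have : 1 < q ^ (k + 1) := one_lt_pow₀ hq (Nat.succ_ne_zero k)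
  linarith

lemma gbinom_Q {q : ℝ} (hq : 1 < q) : ∀ (k : ℕ) (a : ℤ),
    gbinom q a k * (q ^ (a - k) - 1) = gbinom q (a - 1) k * (q ^ a - 1) := by
  intro k
  induction k with
  | zero => intro a; simp [gbinom_zero]
  | succ k ih =>
    intro a
    have h1 : ((k + 1 : ℕ) : ℤ) = (k : ℤ) + 1 := by push_cast; ring
    rw [h1, gbinom_absorb, gbinom_absorb]
    have ihm := ih (a - 1)
    have e1 : a - ((k:ℤ) + 1) = (a - 1) - k := by ring
    rw [e1, div_mul_eq_mul_div, div_mul_eq_mul_div]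
    congr 1
    linear_combination (q ^ a - 1) * ihm

lemma gbinom_pascal1 {q : ℝ} (hq : 1 < q) (a : ℤ) (k : ℕ) :
    gbinom q a ((k : ℤ) + 1) =
      gbinom q (a - 1) k + q ^ ((k : ℤ) + 1) * gbinom q (a - 1) ((k : ℤ) + 1) := by
  have hy := hden hq k
  have hQ := gbinom_Q hq k (a - 1)
  have hx : q ^ ((k : ℤ) + 1) * q ^ (a - 1 - (k : ℤ)) = q ^ a := by
    rw [← zpow_add₀ (ne_of_gt (lt_trans one_pos hq))]; congr 1; ring
  rw [gbinom_absorb, gbinom_absorb]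
  field_simp
  linear_combination q ^ ((k : ℤ) + 1) * hQ - gbinom q (a - 1) (k : ℤ) * hx

lemma gbinom_pascal2 {q : ℝ} (hq : 1 < q) (a : ℤ) (k : ℕ) :
    gbinom q a ((k : ℤ) + 1) =
      q ^ (a - 1 - (k : ℤ)) * gbinom q (a - 1) k + gbinom q (a - 1) ((k : ℤ) + 1) := by
  have hy := hden hq k
  have hQ := gbinom_Q hq k (a - 1)
  have hx : q ^ (a - 1 - (k : ℤ)) * q ^ ((k : ℤ) + 1) = q ^ a := by
    rw [← zpow_add₀ (ne_of_gt (lt_trans one_pos hq))]; congr 1; ring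
  rw [gbinom_absorb, gbinom_absorb]
  field_simp
  linear_combination hQ - gbinom q (a - 1) (k : ℤ) * hx

lemma gbinom_pascal2' {q : ℝ} (hq : 1 < q) (a : ℤ) (k : ℕ) :
    gbinom q a (k : ℤ) =
      q ^ (a - (k : ℤ)) * gbinom q (a - 1) ((k : ℤ) - 1) + gbinom q (a - 1) (k : ℤ) := by
  cases k with
  | zero =>
    simp only [Nat.cast_zero, gbinom_zero]
    rw [gbinom_neg q (a-1) (show (0:ℤ) - 1 < 0 by norm_num)]
    ring
  | succ k =>
    have h1 : ((k + 1 : ℕ) : ℤ) = (k : ℤ) + 1 := by push_cast; ring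
    rw [h1]
    have h2 : (k : ℤ) + 1 - 1 = (k : ℤ) := by ring
    have h3 : a - ((k : ℤ) + 1) = a - 1 - (k : ℤ) := by ring
    rw [h2, h3]
    exact gbinom_pascal2 hq a k

lemma gbinom_top_zero (q : ℝ) (k : ℕ) : gbinom q 0 ((k : ℤ) + 1) = 0 := by
  have h1 : ((k : ℤ) + 1) = ((k + 1 : ℕ) : ℤ) := by push_cast; ring
  rw [h1, gbinom_ofNat]
  apply Finset.prod_eq_zero (Finset.self_mem_range_succ k)
  have : (0 : ℤ) - (k + 1 : ℕ) + k + 1 = 0 := by push_cast; ring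
  rw [this]
  simp

noncomputable def Tsum (q : ℝ) (p n : ℤ) (m : ℕ) : ℝ :=
  ∑ k ∈ Finset.range (m + 1),
    (-1 : ℝ) ^ k * q ^ ((k.choose 2 : ℤ)) * gbinom q p k * gbinom q (n - k) ((m : ℤ) - k)

lemma Tsum_zero (q : ℝ) (p n : ℤ) : Tsum q p n 0 = 1 := by
  simp [Tsum, gbinom_zero, gbinom]

lemma Tsum_rec {q : ℝ} (hq : 1 < q) (p n : ℤ) (m : ℕ) :
    Tsum q (p + 1) n (m + 1) = Tsum q p n (m + 1) - q ^ p * Tsum q p (n - 1) m := by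
  have hne : q ≠ 0 := ne_of_gt (lt_trans one_pos hq)
  unfold Tsum
  have key : ∀ k ∈ Finset.range (m + 1 + 1),
      (-1 : ℝ) ^ k * q ^ ((k.choose 2 : ℤ)) * gbinom q (p + 1) k *
          gbinom q (n - k) (((m + 1 : ℕ) : ℤ) - k)
        = ((-1 : ℝ) ^ k * q ^ ((k.choose 2 : ℤ)) *
              (q ^ (p + 1 - (k : ℤ)) * gbinom q p ((k : ℤ) - 1)) *
              gbinom q (n - k) (((m + 1 : ℕ) : ℤ) - k))
          + (-1 : ℝ) ^ k * q ^ ((k.choose 2 : ℤ)) * gbinom q p k *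
              gbinom q (n - k) (((m + 1 : ℕ) : ℤ) - k) := by
    intro k _
    have h := gbinom_pascal2' hq (p + 1) k
    have e : p + 1 - 1 = p := by ring
    rw [e] at h
    rw [h]; ring
  rw [Finset.sum_congr rfl key, Finset.sum_add_distrib]
  have hA : ∑ k ∈ Finset.range (m + 1 + 1),
      ((-1 : ℝ) ^ k * q ^ ((k.choose 2 : ℤ)) *
          (q ^ (p + 1 - (k : ℤ)) * gbinom q p ((k : ℤ) - 1)) *
          gbinom q (n - k) (((m + 1 : ℕ) : ℤ) - k))
      = -(q ^ p * ∑ k ∈ Finset.range (m + 1),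
          (-1 : ℝ) ^ k * q ^ ((k.choose 2 : ℤ)) * gbinom q p k *
            gbinom q (n - 1 - k) ((m : ℤ) - k)) := by
    rw [Finset.sum_range_succ']
    have h0 : ((-1 : ℝ) ^ 0 * q ^ (((0:ℕ).choose 2 : ℤ)) *
        (q ^ (p + 1 - ((0:ℕ) : ℤ)) * gbinom q p (((0:ℕ) : ℤ) - 1)) *
        gbinom q (n - (0:ℕ)) (((m + 1 : ℕ) : ℤ) - (0:ℕ))) = 0 := by
      rw [gbinom_neg q p (show ((0:ℕ) : ℤ) - 1 < 0 by norm_num)]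
      ring
    rw [h0, add_zero, Finset.mul_sum, ← Finset.sum_neg_distrib]
    apply Finset.sum_congr rfl
    intro j _
    have c1 : (((j+1).choose 2 : ℕ) : ℤ) = ((j.choose 2 : ℕ) : ℤ) + j := by
      have h2 := Nat.choose_succ_succ j 1
      rw [h2, Nat.choose_one_right]
      push_cast; ring
    have c2 : q ^ ((((j+1).choose 2 : ℕ)) : ℤ) * q ^ (p + 1 - ((j:ℤ) + 1))
        = q ^ p * q ^ (((j.choose 2 : ℕ)) : ℤ) := by
      rw [← zpow_add₀ hne, ← zpow_add₀ hne, c1]; congr 1; ring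
    have e1 : ((j + 1 : ℕ) : ℤ) = (j : ℤ) + 1 := by push_cast; ring
    have e2 : n - ((j:ℤ) + 1) = n - 1 - (j : ℤ) := by ring
    have e3 : ((m + 1 : ℕ) : ℤ) - ((j:ℤ) + 1) = (m : ℤ) - (j : ℤ) := by push_cast; ring
    have e4 : (j:ℤ) + 1 - 1 = (j : ℤ) := by ring
    rw [e1, e2, e3, e4, pow_succ]
    linear_combination (-(-1:ℝ)^j * gbinom q p (j:ℤ) * gbinom q (n - 1 - (j:ℤ)) ((m:ℤ) - j)) * c2
  rw [hA]; ring

lemma Tsum_base (q : ℝ) (n : ℤ) (m : ℕ) : Tsum q 0 n m = gbinom q n m := by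
  unfold Tsum
  rw [Finset.sum_eq_single_of_mem 0 (Finset.mem_range.2 (Nat.succ_pos m))]
  · simp [gbinom_zero]
  · intro b _ hb
    obtain ⟨j, rfl⟩ := Nat.exists_eq_succ_of_ne_zero hb
    have : ((j + 1 : ℕ) : ℤ) = (j : ℤ) + 1 := by push_cast; ring
    rw [this, gbinom_top_zero q j]
    ring

lemma Tsum_eq {q : ℝ} (hq : 1 < q) (p : ℤ) : ∀ (n : ℤ) (m : ℕ),
    Tsum q p n m = q ^ ((m : ℤ) * p) * gbinom q (n - p) m := by
  have hne : q ≠ 0 := ne_of_gt (lt_trans one_pos hq)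
  induction p using Int.induction_on with
  | zero => intro n m; rw [Tsum_base]; simp
  | succ i ih =>
    intro n m
    cases m with
    | zero => rw [Tsum_zero]; simp [gbinom_zero]
    | succ m =>
      rw [Tsum_rec hq i n m, ih n (m + 1), ih (n - 1) m]
      have h := gbinom_pascal1 hq (n - i) m
      have x1 : q ^ (((m:ℤ) + 1) * ((i:ℤ) + 1)) = q ^ (((m:ℤ) + 1) * (i:ℤ)) * q ^ ((m:ℤ) + 1) := by
        rw [← zpow_add₀ hne]; try ring
      have x2 : q ^ ((i:ℤ)) * q ^ ((m:ℤ) * (i:ℤ)) = q ^ (((m:ℤ) + 1) * (i:ℤ)) := by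
        rw [← zpow_add₀ hne]; try ring
      push_cast
      rw [show n - 1 - (i:ℤ) = n - (i:ℤ) - 1 from by ring,
          show n - ((i:ℤ) + 1) = n - (i:ℤ) - 1 from by ring]
      linear_combination q ^ (((m:ℤ) + 1) * (i:ℤ)) * h
        + gbinom q (n - (i:ℤ) - 1) ((m:ℤ) + 1) * x1.symm
        - gbinom q (n - (i:ℤ) - 1) (m:ℤ) * x2
  | pred i ih =>
    intro n m
    induction m generalizing n with
    | zero => rw [Tsum_zero]; simp [gbinom_zero]
    | succ m ihm =>
      have hr := Tsum_rec hq (-(i:ℤ) - 1) n m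
      rw [show (-(i:ℤ) - 1 + 1) = -(i:ℤ) from by ring] at hr
      have ihn := ih n (m + 1)
      have ihm' := ihm (n - 1)
      have h := gbinom_pascal1 hq (n + (i:ℤ) + 1) m
      have x1 : q ^ (((m:ℤ) + 1) * (-(i:ℤ) - 1)) * q ^ ((m:ℤ) + 1) = q ^ (((m:ℤ) + 1) * (-(i:ℤ))) := by
        rw [← zpow_add₀ hne]; try ring
      have x2 : q ^ (-(i:ℤ) - 1) * q ^ ((m:ℤ) * (-(i:ℤ) - 1)) = q ^ (((m:ℤ) + 1) * (-(i:ℤ) - 1)) := by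
        rw [← zpow_add₀ hne]; try ring
      push_cast at ihn ihm' ⊢
      rw [show n - -(i:ℤ) = n + (i:ℤ) from by ring] at ihn
      rw [show n - 1 - (-(i:ℤ) - 1) = n + (i:ℤ) from by ring] at ihm'
      rw [show n - (-(i:ℤ) - 1) = n + (i:ℤ) + 1 from by ring]
      rw [show n + (i:ℤ) + 1 - 1 = n + (i:ℤ) from by ring] at h
      linear_combination -hr + ihn + q ^ (-(i:ℤ) - 1) * ihm'
        - q ^ (((m:ℤ) + 1) * (-(i:ℤ) - 1)) * h
        - gbinom q (n + (i:ℤ)) ((m:ℤ) + 1) * x1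
        + gbinom q (n + (i:ℤ)) (m:ℤ) * x2

theorem stmt9 (q : ℝ) (hq : 1 < q) (n p : ℤ) (m : ℕ) :
    gbinom q (n - p) m =
      ∑ k ∈ Finset.range (m + 1),
        (-1 : ℝ) ^ k * q ^ (-((m : ℤ) * p) + (k.choose 2 : ℤ)) *
          gbinom q p k * gbinom q (n - k) ((m : ℤ) - k) := by
  have hne : q ≠ 0 := ne_of_gt (lt_trans one_pos hq)
  have key : ∑ k ∈ Finset.range (m + 1),
        (-1 : ℝ) ^ k * q ^ (-((m : ℤ) * p) + (k.choose 2 : ℤ)) *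
          gbinom q p k * gbinom q (n - k) ((m : ℤ) - k)
      = q ^ (-((m : ℤ) * p)) * Tsum q p n m := by
    unfold Tsum
    rw [Finset.mul_sum]
    refine Finset.sum_congr rfl ?_
    intro k _
    rw [zpow_add₀ hne]
    ring
  rw [key, Tsum_eq hq p n m, ← mul_assoc, ← zpow_add₀ hne,
      show -((m : ℤ) * p) + (m : ℤ) * p = 0 from by ring, zpow_zero, one_mul]
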